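/- Let (t,u,v,w) ∈ 𝒫 and assume u = v = w does not hold. Let s ∈ {x,y,z}, p ∈ ℤ, and let ω : ℤ → A be the shifted symmetric sequence ω(n) := ω⁽ˢ⁾(n + p). Then the associated Schrödinger-type operator has no eigenvalues: for every E ∈ ℝ, every u : ℤ → ℂ with ∑_{n∈ℤ} |u(n)|² < ∞ satisfying f_ω(n)u(n+1) + f_ω(n−1)u(n−1) + g_ω(n)u(n) = E·u(n) for all n ∈ ℤ vanishes identically. (This is the absence of eigenvalues for the Laplacians on the Schreier graphs in the family X₁, transported to the subshift side.) -/

import Mathlib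

/-- The four-letter alphabet `A = {a, x, y, z}`. -/
inductive A : Type
  | a | x | y | z
  deriving DecidableEq, Repr

/-- The substitution `τ : a ↦ axa, x ↦ y, y ↦ z, z ↦ x`. -/
def tau : A → List A
  | A.a => [A.a, A.x, A.a]
  | A.x => [A.y]
  | A.y => [A.z]
  | A.z => [A.x]

/-- The substitution `τ` extended to finite words by concatenation. -/
def tauW (w : List A) : List A := w.flatMap tau

/-- `pw n = τⁿ(a)`, a word of length `2^(n+1) - 1`. -/
def pw : ℕ → List A
  | 0 => [A.a]
  | n + 1 => tauW (pw n)

/-- The fixed point `η` of `τ`: the unique one-sided infinite word having every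
`τⁿ(a)` as a prefix.  (Since `pw (n+1)` has length `2^(n+2) - 1 > n`, reading its
`n`-th letter is well defined and independent of the choice of a large enough iterate.) -/
def eta (n : ℕ) : A := (pw (n + 1)).getD n A.a

/-- `w` is a (finite) factor of `η`. -/
def IsFactorEta (w : List A) : Prop :=
  ∃ i : ℕ, w = (List.range w.length).map (fun k => eta (i + k))

/-- The special two-sided sequence `ω⁽ˢ⁾`, with `ω⁽ˢ⁾(0) = s` and
`ω⁽ˢ⁾(k) = η(|k| - 1)` for `k ≠ 0`. -/
def omegaS (s : A) : ℤ → A := fun k => if k = 0 then s else eta (k.natAbs - 1)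

/-- The diagonal-adjacent (hopping) coefficients `f_ω` of the Schrödinger operator
associated to `ω` and parameters `(t,u,v,w)`. -/
def fcoef (t u v w : ℝ) (ω : ℤ → A) (n : ℤ) : ℝ :=
  match ω n with
  | A.a => t
  | A.x => u + v
  | A.y => u + w
  | A.z => v + w

/-- The diagonal (potential) coefficients `g_ω` of the Schrödinger operator
associated to `ω` and parameters `(t,u,v,w)`. -/
def gcoef (_t u v w : ℝ) (ω : ℤ → A) (n : ℤ) : ℝ :=
  if ω (n - 1) = A.x ∨ ω n = A.x then w
  else if ω (n - 1) = A.y ∨ ω n = A.y then v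
  else u

/-- The parameter set `𝒫`. -/
def paramP (t u v w : ℝ) : Prop := t ≠ 0 ∧ u + v ≠ 0 ∧ u + w ≠ 0 ∧ v + w ≠ 0


/-- cyclic letter sequence: middle letters of the blocks -/
def cyc (n : ℕ) : A := match n % 3 with
  | 0 => A.x
  | 1 => A.y
  | _ => A.z

lemma tau_cyc (n : ℕ) : tau (cyc n) = [cyc (n+1)] := by
  have h : n % 3 = 0 ∨ n % 3 = 1 ∨ n % 3 = 2 := by omega
  have h1 : (n+1) % 3 = (n % 3 + 1) % 3 := by omega
  rcases h with h | h | h <;> simp [cyc, h, h1, tau]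

lemma pw_succ (n : ℕ) : pw (n+1) = pw n ++ cyc n :: pw n := by
  induction n with
  | zero => rfl
  | succ n ih =>
    show tauW (pw (n+1)) = _
    rw [ih]
    show tauW (pw n ++ cyc n :: pw n) = _
    unfold tauW
    rw [List.flatMap_append, List.flatMap_cons, tau_cyc]
    rw [← ih]
    rfl

lemma pw_length (n : ℕ) : (pw n).length = 2^(n+1) - 1 := by
  induction n with
  | zero => rfl
  | succ n ih =>
    rw [pw_succ, List.length_append, List.length_cons, ih]
    have : 1 ≤ 2^(n+1) := Nat.one_le_two_pow
    have : 2^(n+2) = 2 * 2^(n+1) := by ring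
    omega

lemma two_le_pow (n : ℕ) : 2 ≤ 2^(n+1) := by
  calc 2 = 2^1 := rfl
  _ ≤ 2^(n+1) := Nat.pow_le_pow_right (by norm_num) (by omega)

lemma pw_prefix_succ (n : ℕ) : pw n <+: pw (n+1) := ⟨cyc n :: pw n, (pw_succ n).symm⟩

lemma pw_prefix {m n : ℕ} (h : m ≤ n) : pw m <+: pw n := by
  induction n with
  | zero => simp_all
  | succ n ih =>
    rcases Nat.lt_or_ge m (n+1) with h' | h'
    · exact (ih (by omega)).trans (pw_prefix_succ n)
    · have : m = n+1 := by omega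
      simp [this]

lemma getD_prefix {l₁ l₂ : List A} (h : l₁ <+: l₂) {m : ℕ} (hm : m < l₁.length) :
    l₂.getD m A.a = l₁.getD m A.a := by
  obtain ⟨t, rfl⟩ := h
  exact List.getD_append _ _ _ _ hm

lemma eta_eq_getD {n m : ℕ} (h : m < (pw n).length) : eta m = (pw n).getD m A.a := by
  have hm : m < (pw (m+1)).length := by
    rw [pw_length]
    have := Nat.lt_two_pow_self (n := m)
    have : 2^m ≤ 2^(m+2) := Nat.pow_le_pow_right (by norm_num) (by omega)
    have := Nat.lt_two_pow_self (n := m)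
    omega
  rcases Nat.le_total (m+1) n with h' | h'
  · exact (getD_prefix (pw_prefix h') hm).symm
  · exact (getD_prefix (pw_prefix h') h)

lemma eta_zero : eta 0 = A.a := rfl

lemma pw_reverse (n : ℕ) : (pw n).reverse = pw n := by
  induction n with
  | zero => rfl
  | succ n ih =>
    rw [pw_succ, List.reverse_append, List.reverse_cons, ih]
    simp

lemma eta_pal {n j : ℕ} (hj : j ≤ 2^(n+1) - 2) : eta j = eta (2^(n+1) - 2 - j) := by
  have h2 := two_le_pow n
  have hl : (pw n).length = 2^(n+1) - 1 := pw_length n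
  have hj1 : j < (pw n).length := by omega
  have hj2 : 2^(n+1) - 2 - j < (pw n).length := by omega
  rw [eta_eq_getD hj1, eta_eq_getD hj2,
    List.getD_eq_getElem?_getD, List.getD_eq_getElem?_getD]
  have h3 : (pw n).reverse[j]? = (pw n)[(pw n).length - 1 - j]? := List.getElem?_reverse hj1
  rw [pw_reverse] at h3
  rw [h3, hl]
  congr 2

lemma eta_period {n j : ℕ} (hj : j ≤ 2^(n+1) - 2) : eta (j + 2^(n+1)) = eta j := by
  have h2 := two_le_pow n
  have hl : (pw n).length = 2^(n+1) - 1 := pw_length n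
  have hl1 : (pw (n+1)).length = 2^(n+2) - 1 := pw_length (n+1)
  have hlt : j + 2^(n+1) < (pw (n+1)).length := by
    have : 2^(n+2) = 2 * 2^(n+1) := by ring
    omega
  rw [eta_eq_getD hlt, eta_eq_getD (show j < (pw n).length by omega)]
  rw [pw_succ]
  rw [show pw n ++ cyc n :: pw n = (pw n ++ [cyc n]) ++ pw n by simp]
  rw [List.getD_append_right _ _ _ _ (by simp; omega)]
  congr 1
  simp
  omega

lemma eta_sep (n : ℕ) : eta (2^(n+1) - 1) = cyc n := by
  have h2 := two_le_pow n
  have hl : (pw n).length = 2^(n+1) - 1 := pw_length n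
  have hl1 : (pw (n+1)).length = 2^(n+2) - 1 := pw_length (n+1)
  have hlt : 2^(n+1) - 1 < (pw (n+1)).length := by
    have : 2^(n+2) = 2 * 2^(n+1) := by ring
    omega
  rw [eta_eq_getD hlt, pw_succ]
  rw [List.getD_append_right _ _ _ _ (by omega)]
  rw [hl]
  simp

lemma omegaS_ne (s : A) {k : ℤ} (h : k ≠ 0) : omegaS s k = eta (k.natAbs - 1) := by
  simp [omegaS, h]

lemma omegaS_zero (s : A) : omegaS s 0 = s := rfl

lemma omegaS_per {s : A} {n : ℕ} (hc : cyc n = s) {j : ℤ}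
    (h1 : -((2^(n+1) : ℕ) : ℤ) - 1 ≤ j) (h2 : j ≤ ((2^(n+1) : ℕ) : ℤ) - 1) :
    omegaS s (j + ((2^(n+1) : ℕ) : ℤ)) = omegaS s j := by
  set Q : ℕ := 2^(n+1) with hQ
  have h2Q : 2 ≤ Q := two_le_pow n
  have hsep : eta (Q - 1) = s := by rw [← hc, hQ]; exact eta_sep n
  have hper : ∀ i : ℕ, i ≤ Q - 2 → eta (i + Q) = eta i := fun i hi => eta_period hi
  have hpal : ∀ i : ℕ, i ≤ Q - 2 → eta i = eta (Q - 2 - i) := fun i hi => eta_pal hi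
  rcases eq_or_lt_of_le h1 with he | h1
  · -- j = -Q - 1
    have hj : j = -(Q:ℤ) - 1 := he.symm
    subst hj
    rw [omegaS_ne s (by omega), omegaS_ne s (by omega)]
    have e1 : ((-(Q:ℤ) - 1) + Q).natAbs - 1 = 0 := by omega
    have e2 : (-(Q:ℤ) - 1).natAbs - 1 = Q := by omega
    rw [e1, e2]
    have := hper 0 (by omega)
    simpa using this.symm
  rcases lt_trichotomy j 0 with hj | hj | hj
  · rcases eq_or_lt_of_le (show -(Q:ℤ) ≤ j by omega) with he | hlt
    · -- j = -Q
      have hj' : j = -(Q:ℤ) := he.symm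
      subst hj'
      rw [show -(Q:ℤ) + Q = 0 by ring, omegaS_zero, omegaS_ne s (by omega)]
      have e2 : (-(Q:ℤ)).natAbs - 1 = Q - 1 := by omega
      rw [e2, hsep]
    · -- -Q < j < 0
      rw [omegaS_ne s (by omega), omegaS_ne s (by omega)]
      have e1 : (j + (Q:ℤ)).natAbs - 1 = Q - 2 - (j.natAbs - 1) := by omega
      rw [e1]
      exact (hpal (j.natAbs - 1) (by omega)).symm
  · -- j = 0
    subst hj
    rw [omegaS_ne s (by omega), omegaS_zero]
    have e1 : ((0:ℤ) + Q).natAbs - 1 = Q - 1 := by omega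
    rw [e1, hsep]
  · -- 0 < j ≤ Q - 1
    rw [omegaS_ne s (by omega), omegaS_ne s (by omega)]
    have e1 : (j + (Q:ℤ)).natAbs - 1 = (j.natAbs - 1) + Q := by omega
    rw [e1]
    exact hper (j.natAbs - 1) (by omega)

/-- for each non-`a` letter, the residue of levels whose middle letter is `s` -/
def resOf : A → ℕ
  | A.x => 0
  | A.y => 1
  | A.z => 2
  | A.a => 0

lemma cyc_resOf (s : A) (hs : s ≠ A.a) (k : ℕ) : cyc (3 * k + resOf s) = s := by
  have h : (3 * k + resOf s) % 3 = resOf s % 3 := by omega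
  cases s <;> simp_all [cyc, resOf]

noncomputable section

lemma mulVec_two (a b c d x y : ℂ) :
    (!![a,b;c,d]).mulVec ![x,y] = ![a*x+b*y, c*x+d*y] := by
  funext i
  fin_cases i <;> simp [Matrix.mulVec, dotProduct, Fin.sum_univ_two]

def amat (F G : ℤ → ℂ) (E : ℂ) (m : ℤ) : Matrix (Fin 2) (Fin 2) ℂ :=
  !![(E - G m)/F m, -(F (m-1))/F m; 1, 0]

def tmat (F G : ℤ → ℂ) (E : ℂ) (r : ℤ) : ℕ → Matrix (Fin 2) (Fin 2) ℂ
  | 0 => 1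
  | k+1 => amat F G E (r + k) * tmat F G E r k

def svec (ψ : ℤ → ℂ) (m : ℤ) : Fin 2 → ℂ := ![ψ (m+1), ψ m]

variable {F G : ℤ → ℂ} {E : ℂ} {ψ : ℤ → ℂ}

lemma svec_step (hF : ∀ m, F m ≠ 0)
    (hrec : ∀ n : ℤ, F n * ψ (n+1) + F (n-1) * ψ (n-1) + G n * ψ n = E * ψ n)
    (m : ℤ) : svec ψ m = (amat F G E m).mulVec (svec ψ (m-1)) := by
  have h1 : svec ψ (m-1) = ![ψ m, ψ (m-1)] := by
    unfold svec; rw [show m - 1 + 1 = m by ring]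
  rw [h1, amat, mulVec_two]
  funext i
  fin_cases i
  · show ψ (m+1) = (E - G m)/F m * ψ m + (-(F (m-1))/F m) * ψ (m-1)
    rw [div_mul_eq_mul_div, div_mul_eq_mul_div, ← add_div, eq_div_iff (hF m)]
    linear_combination hrec m
  · show ψ m = 1 * ψ m + 0 * ψ (m-1)
    ring

lemma svec_transfer (hF : ∀ m, F m ≠ 0)
    (hrec : ∀ n : ℤ, F n * ψ (n+1) + F (n-1) * ψ (n-1) + G n * ψ n = E * ψ n)
    (r : ℤ) : ∀ k : ℕ, svec ψ (r - 1 + k) = (tmat F G E r k).mulVec (svec ψ (r-1))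
  | 0 => by simp [tmat, Matrix.one_mulVec]
  | (k+1) => by
      push_cast
      rw [show r - 1 + ((k:ℤ)+1) = r + k by ring]
      rw [svec_step hF hrec (r + k), show r + (k:ℤ) - 1 = r - 1 + k by ring,
        svec_transfer hF hrec r k, tmat, Matrix.mulVec_mulVec]

lemma tmat_congr {r r' : ℤ} : ∀ (K : ℕ), (∀ k : ℕ, k < K → amat F G E (r+k) = amat F G E (r'+k)) →
    tmat F G E r K = tmat F G E r' K
  | 0, _ => rfl
  | (K+1), h => by
      rw [tmat, tmat, h K (by omega), tmat_congr K (fun k hk => h k (by omega))]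

lemma det_amat (hF : ∀ m, F m ≠ 0) (m : ℤ) : (amat F G E m).det * F m = F (m-1) := by
  simp only [amat, Matrix.det_fin_two_of]
  field_simp
  rw [mul_comm, mul_div_cancel_right₀ _ (hF m)]
  ring

lemma det_tmat (hF : ∀ m, F m ≠ 0) (r : ℤ) :
    ∀ k : ℕ, (tmat F G E r k).det * F (r - 1 + k) = F (r - 1)
  | 0 => by simp [tmat]
  | (k+1) => by
      rw [tmat, Matrix.det_mul]
      push_cast
      rw [show r - 1 + ((k:ℤ)+1) = r + k by ring]
      calc (amat F G E (r+k)).det * (tmat F G E r k).det * F (r+k)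
          = (tmat F G E r k).det * ((amat F G E (r+k)).det * F (r+k)) := by ring
        _ = (tmat F G E r k).det * F (r+k-1) := by rw [det_amat hF]
        _ = (tmat F G E r k).det * F (r-1+k) := by rw [show r+(k:ℤ)-1 = r-1+k by ring]
        _ = F (r-1) := det_tmat hF r k

lemma ch_two (M : Matrix (Fin 2) (Fin 2) ℂ) (h : M.det = 1) (v : Fin 2 → ℂ) :
    M.mulVec (M.mulVec v) + v = M.trace • M.mulVec v := by
  have hM : M = !![M 0 0, M 0 1; M 1 0, M 1 1] := Matrix.etaExpand_eq M |>.symm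
  have hv : v = ![v 0, v 1] := by funext i; fin_cases i <;> rfl
  rw [Matrix.det_fin_two] at h
  rw [hM, hv, Matrix.trace_fin_two, mulVec_two, mulVec_two]
  funext i
  fin_cases i
  · simp only [Pi.add_apply, Pi.smul_apply, smul_eq_mul]
    norm_num
    first
      | linear_combination (v 0) * h
      | linear_combination (-(v 0)) * h
  · simp only [Pi.add_apply, Pi.smul_apply, smul_eq_mul]
    norm_num
    first
      | linear_combination (v 1) * h
      | linear_combination (-(v 1)) * h

lemma gordon_scalar (c α A B C : ℂ) (h1 : B + A = c * α) (h2 : C + α = c * B) :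
    ‖α‖ ≤ ‖A‖ + ‖B‖ + ‖C‖ := by
  by_cases hc : ‖c‖ ≤ 1
  · have hα : α = c * B - C := by linear_combination h2
    calc ‖α‖ = ‖c * B - C‖ := by rw [hα]
      _ ≤ ‖c * B‖ + ‖C‖ := norm_sub_le _ _
      _ = ‖c‖ * ‖B‖ + ‖C‖ := by rw [norm_mul]
      _ ≤ 1 * ‖B‖ + ‖C‖ := by
          have := mul_le_mul_of_nonneg_right hc (norm_nonneg B); linarith
      _ ≤ ‖A‖ + ‖B‖ + ‖C‖ := by
          have := norm_nonneg A; linarith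
  · push_neg at hc
    have h3 : ‖α‖ ≤ ‖c‖ * ‖α‖ := by
      nlinarith [norm_nonneg α]
    calc ‖α‖ ≤ ‖c‖ * ‖α‖ := h3
      _ = ‖c * α‖ := (norm_mul _ _).symm
      _ = ‖B + A‖ := by rw [h1]
      _ ≤ ‖B‖ + ‖A‖ := norm_add_le _ _
      _ ≤ ‖A‖ + ‖B‖ + ‖C‖ := by have := norm_nonneg C; linarith


noncomputable def Fc (t u v w : ℝ) (ω : ℤ → A) (m : ℤ) : ℂ := ((fcoef t u v w ω m : ℝ) : ℂ)
noncomputable def Gc (t u v w : ℝ) (ω : ℤ → A) (m : ℤ) : ℂ := ((gcoef t u v w ω m : ℝ) : ℂ)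

lemma svec_zero (ψ : ℤ → ℂ) (m : ℤ) : svec ψ m 0 = ψ (m+1) := rfl
lemma svec_one (ψ : ℤ → ℂ) (m : ℤ) : svec ψ m 1 = ψ m := rfl

lemma key_bound (t u v w E : ℝ) (ψ : ℤ → ℂ) (s : A) (p : ℤ)
    (hF : ∀ m, Fc t u v w (fun m => omegaS s (m + p)) m ≠ 0)
    (hrec : ∀ n : ℤ, Fc t u v w (fun m => omegaS s (m + p)) n * ψ (n+1) +
      Fc t u v w (fun m => omegaS s (m + p)) (n-1) * ψ (n-1) +
      Gc t u v w (fun m => omegaS s (m + p)) n * ψ n = (E:ℂ) * ψ n)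
    (ht : t ≠ 0)
    (n : ℕ) (hc : cyc n = s) :
    (‖ψ (-p)‖ ≤ ‖ψ (-p - ((2^(n+1):ℕ):ℤ))‖ + ‖ψ (-p + ((2^(n+1):ℕ):ℤ))‖
        + ‖ψ (-p + 2*((2^(n+1):ℕ):ℤ))‖)
    ∧ (‖ψ (-p - 1)‖ ≤ ‖ψ (-p - ((2^(n+1):ℕ):ℤ) - 1)‖ + ‖ψ (-p + ((2^(n+1):ℕ):ℤ) - 1)‖
        + ‖ψ (-p + 2*((2^(n+1):ℕ):ℤ) - 1)‖) := by
  set ω : ℤ → A := fun m => omegaS s (m + p) with hωdef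
  set F : ℤ → ℂ := Fc t u v w ω with hFdef
  set G : ℤ → ℂ := Gc t u v w ω with hGdef
  set m₀ : ℤ := -p with hm₀
  set Q : ℕ := 2^(n+1) with hQdef
  have h2Q : 2 ≤ Q := two_le_pow n
  have h2Q' : (2:ℤ) ≤ (Q:ℤ) := by exact_mod_cast h2Q
  -- periodicity of ω on the window
  have hper : ∀ m : ℤ, m₀ - Q - 1 ≤ m → m ≤ m₀ + Q - 1 → ω (m + Q) = ω m := by
    intro m hm1 hm2
    show omegaS s (m + (Q:ℤ) + p) = omegaS s (m + p)
    rw [show m + (Q:ℤ) + p = (m + p) + ((2^(n+1):ℕ):ℤ) by rw [hQdef]; ring]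
    exact omegaS_per hc (by rw [← hQdef]; omega) (by rw [← hQdef]; omega)
  -- congruence of transfer matrices
  have acongr : ∀ m m' : ℤ, ω (m-1) = ω (m'-1) → ω m = ω m' →
      amat F G (E:ℂ) m = amat F G (E:ℂ) m' := by
    intro m m' h1 h2
    have hf : F m = F m' := by
      show Fc t u v w ω m = Fc t u v w ω m'
      unfold Fc fcoef; rw [h2]
    have hf' : F (m-1) = F (m'-1) := by
      show Fc t u v w ω (m-1) = Fc t u v w ω (m'-1)
      unfold Fc fcoef; rw [h1]
    have hg : G m = G m' := by
      show Gc t u v w ω m = Gc t u v w ω m'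
      unfold Gc gcoef; rw [h1, h2]
    unfold amat; rw [hf, hf', hg]
  have hamat : ∀ m : ℤ, m₀ - Q ≤ m → m ≤ m₀ + Q - 1 →
      amat F G (E:ℂ) (m + Q) = amat F G (E:ℂ) m := by
    intro m hm1 hm2
    apply acongr
    · rw [show m + (Q:ℤ) - 1 = (m-1) + Q by ring]
      exact hper (m-1) (by omega) (by omega)
    · exact hper m (by omega) (by omega)
  have hT1 : tmat F G (E:ℂ) (m₀ - Q) Q = tmat F G (E:ℂ) m₀ Q := by
    apply tmat_congr
    intro k hk
    have hkz : (k:ℤ) < (Q:ℤ) := by exact_mod_cast hk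
    have h := hamat (m₀ - Q + k) (by omega) (by omega)
    rw [show m₀ - (Q:ℤ) + k + Q = m₀ + k by ring] at h
    exact h.symm
  have hT2 : tmat F G (E:ℂ) (m₀ + Q) Q = tmat F G (E:ℂ) m₀ Q := by
    apply tmat_congr
    intro k hk
    have hkz : (k:ℤ) < (Q:ℤ) := by exact_mod_cast hk
    have h := hamat (m₀ + k) (by omega) (by omega)
    rw [show m₀ + (k:ℤ) + Q = m₀ + Q + k by ring] at h
    exact h
  -- the letters at the two block ends are `a`
  have hωa1 : ω (m₀ - 1) = A.a := by
    show omegaS s (m₀ - 1 + p) = A.a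
    rw [show m₀ - 1 + p = (-1 : ℤ) by omega]
    rw [omegaS_ne s (by norm_num)]
    simpa using eta_zero
  have hωa2 : ω (m₀ - 1 + Q) = A.a := by
    show omegaS s (m₀ - 1 + Q + p) = A.a
    rw [show m₀ - 1 + (Q:ℤ) + p = (Q:ℤ) - 1 by omega]
    rw [omegaS_ne s (by omega)]
    rw [show ((Q:ℤ) - 1).natAbs - 1 = Q - 2 by omega]
    rw [hQdef]
    have h := eta_pal (n := n) (j := 0) (by omega)
    rw [Nat.sub_zero] at h
    rw [← h]
    exact eta_zero
  have hdetT : (tmat F G (E:ℂ) m₀ Q).det = 1 := by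
    have h := det_tmat (F := F) (G := G) (E := (E:ℂ)) hF m₀ Q
    have e1 : F (m₀ - 1 + Q) = (t:ℂ) := by
      show Fc t u v w ω (m₀ - 1 + Q) = (t:ℂ)
      unfold Fc fcoef; rw [hωa2]
    have e2 : F (m₀ - 1) = (t:ℂ) := by
      show Fc t u v w ω (m₀ - 1) = (t:ℂ)
      unfold Fc fcoef; rw [hωa1]
    rw [e1, e2] at h
    have htC : (t:ℂ) ≠ 0 := Complex.ofReal_ne_zero.mpr ht
    exact mul_right_cancel₀ htC (by rw [h, one_mul])
  set T := tmat F G (E:ℂ) m₀ Q with hTdef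
  have r2 : svec ψ (m₀ - 1 + Q) = T.mulVec (svec ψ (m₀-1)) := svec_transfer hF hrec m₀ Q
  have r1 : svec ψ (m₀ - 1) = T.mulVec (svec ψ (m₀ - 1 - Q)) := by
    have h := svec_transfer hF hrec (m₀ - Q) Q
    rw [hT1] at h
    rw [show m₀ - (Q:ℤ) - 1 + Q = m₀ - 1 by ring, show m₀ - (Q:ℤ) - 1 = m₀ - 1 - Q by ring] at h
    exact h
  have r3 : svec ψ (m₀ - 1 + 2*Q) = T.mulVec (svec ψ (m₀ - 1 + Q)) := by
    have h := svec_transfer hF hrec (m₀ + Q) Q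
    rw [hT2] at h
    rw [show m₀ + (Q:ℤ) - 1 + Q = m₀ - 1 + 2*Q by ring,
      show m₀ + (Q:ℤ) - 1 = m₀ - 1 + Q by ring] at h
    exact h
  have ch1 : svec ψ (m₀ - 1 + Q) + svec ψ (m₀ - 1 - Q) = T.trace • svec ψ (m₀ - 1) := by
    have h := ch_two T hdetT (svec ψ (m₀ - 1 - Q))
    rw [← r1, ← r2] at h
    exact h
  have ch2' : svec ψ (m₀ - 1 + 2*Q) + svec ψ (m₀ - 1) = T.trace • svec ψ (m₀ - 1 + Q) := by
    have h := ch_two T hdetT (svec ψ (m₀ - 1))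
    rw [← r2, ← r3] at h
    exact h
  constructor
  · have e1 := congrFun ch1 0
    have e2 := congrFun ch2' 0
    simp only [Pi.add_apply, Pi.smul_apply, smul_eq_mul, svec_zero] at e1 e2
    rw [show m₀ - 1 + (Q:ℤ) + 1 = m₀ + Q by ring, show m₀ - 1 - (Q:ℤ) + 1 = m₀ - Q by ring,
      show m₀ - 1 + 1 = m₀ by ring] at e1
    rw [show m₀ - 1 + 2*(Q:ℤ) + 1 = m₀ + 2*Q by ring, show m₀ - 1 + (Q:ℤ) + 1 = m₀ + Q by ring,
      show m₀ - 1 + 1 = m₀ by ring] at e2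
    exact gordon_scalar T.trace _ _ _ _ e1 e2
  · have e1 := congrFun ch1 1
    have e2 := congrFun ch2' 1
    simp only [Pi.add_apply, Pi.smul_apply, smul_eq_mul, svec_one] at e1 e2
    rw [show m₀ - 1 + (Q:ℤ) = m₀ + Q - 1 by ring, show m₀ - 1 - (Q:ℤ) = m₀ - Q - 1 by ring] at e1
    rw [show m₀ - 1 + 2*(Q:ℤ) = m₀ + 2*Q - 1 by ring, show m₀ - 1 + (Q:ℤ) = m₀ + Q - 1 by ring] at e2
    exact gordon_scalar T.trace _ _ _ _ e1 e2

/-- **Absence of eigenvalues** for the operators attached to the shifted symmetric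
sequences `ω(n) = ω⁽ˢ⁾(n + p)` (the family `X₁` of Schreier graphs): for
`(t,u,v,w) ∈ 𝒫` with not `u = v = w`, every square-summable solution of the
eigenvalue equation vanishes identically. -/
theorem absence_of_eigenvalues_X1 (t u v w : ℝ) (hP : paramP t u v w)
    (hne : ¬ (u = v ∧ v = w))
    (s : A) (hs : s ∈ ({A.x, A.y, A.z} : Set A)) (p : ℤ)
    (E : ℝ) (ψ : ℤ → ℂ)
    (hl2 : Summable fun n : ℤ => ‖ψ n‖ ^ 2)
    (heig : ∀ n : ℤ,
      (fcoef t u v w (fun m => omegaS s (m + p)) n : ℂ) * ψ (n + 1) +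
      (fcoef t u v w (fun m => omegaS s (m + p)) (n - 1) : ℂ) * ψ (n - 1) +
      (gcoef t u v w (fun m => omegaS s (m + p)) n : ℂ) * ψ n = (E : ℂ) * ψ n) :
    ψ = 0 := by
  obtain ⟨ht, huv, huw, hvw⟩ := hP
  have hsa : s ≠ A.a := by
    simp only [Set.mem_insert_iff, Set.mem_singleton_iff] at hs
    rcases hs with rfl | rfl | rfl <;> simp
  set ω : ℤ → A := fun m => omegaS s (m + p) with hωdef
  have hF : ∀ m, Fc t u v w ω m ≠ 0 := by
    intro m
    have h : fcoef t u v w ω m ≠ 0 := by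
      unfold fcoef
      cases ω m
      · exact ht
      · exact huv
      · exact huw
      · exact hvw
    exact Complex.ofReal_ne_zero.mpr h
  have hrec : ∀ n : ℤ, Fc t u v w ω n * ψ (n+1) + Fc t u v w ω (n-1) * ψ (n-1) +
      Gc t u v w ω n * ψ n = (E:ℂ) * ψ n := heig
  set m₀ : ℤ := -p with hm₀
  set r : ℕ := resOf s with hr
  have hcyc : ∀ k : ℕ, cyc (3*k + r) = s := cyc_resOf s hsa
  -- decay of ψ along injective integer sequences
  have hto : Filter.Tendsto (fun m : ℤ => ‖ψ m‖) Filter.cofinite (nhds 0) := by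
    have h1 := hl2.tendsto_cofinite_zero
    have h3 := (Real.continuous_sqrt.tendsto 0).comp h1
    rw [Real.sqrt_zero] at h3
    refine h3.congr (fun m => ?_)
    simp only [Function.comp_apply]
    rw [Real.sqrt_sq (norm_nonneg _)]
  have hcomp : ∀ (g : ℕ → ℤ), Function.Injective g →
      Filter.Tendsto (fun k => ‖ψ (g k)‖) Filter.atTop (nhds 0) := by
    intro g hg
    have h := hto.comp hg.tendsto_cofinite
    rwa [Nat.cofinite_eq_atTop] at h
  have hpow : ∀ {k l : ℕ}, k < l → ((2^(3*k+r+1):ℕ):ℤ) < ((2^(3*l+r+1):ℕ):ℤ) := by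
    intro k l h
    exact_mod_cast Nat.pow_lt_pow_right one_lt_two (by omega)
  have hinj : ∀ (c d : ℤ), d ≠ 0 →
      Function.Injective (fun k : ℕ => c + d * ((2^(3*k+r+1):ℕ):ℤ)) := by
    intro c d hd k l h
    simp only at h
    by_contra hkl
    rcases Nat.lt_or_ge k l with h2 | h2
    · have h3 := hpow h2
      have h4 : ((2^(3*k+r+1):ℕ):ℤ) = ((2^(3*l+r+1):ℕ):ℤ) :=
        mul_left_cancel₀ hd (by linarith)
      omega
    · have h5 : l < k := by omega
      have h3 := hpow h5
      have h4 : ((2^(3*k+r+1):ℕ):ℤ) = ((2^(3*l+r+1):ℕ):ℤ) :=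
        mul_left_cancel₀ hd (by linarith)
      omega
  -- a generic limit step
  have hzero : ∀ (c : ℤ),
      (∀ k : ℕ, ‖ψ c‖ ≤ ‖ψ (c + (-1) * ((2^(3*k+r+1):ℕ):ℤ))‖
        + ‖ψ (c + 1 * ((2^(3*k+r+1):ℕ):ℤ))‖ + ‖ψ (c + 2 * ((2^(3*k+r+1):ℕ):ℤ))‖) → ψ c = 0 := by
    intro c hb
    have t1 := hcomp _ (hinj c (-1) (by norm_num))
    have t2 := hcomp _ (hinj c 1 (by norm_num))
    have t3 := hcomp _ (hinj c 2 (by norm_num))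
    have tsum : Filter.Tendsto (fun k : ℕ => ‖ψ (c + (-1) * ((2^(3*k+r+1):ℕ):ℤ))‖
        + ‖ψ (c + 1 * ((2^(3*k+r+1):ℕ):ℤ))‖ + ‖ψ (c + 2 * ((2^(3*k+r+1):ℕ):ℤ))‖)
        Filter.atTop (nhds 0) := by
      have h := (t1.add t2).add t3
      simpa using h
    have hle : ‖ψ c‖ ≤ 0 := ge_of_tendsto' tsum hb
    have := norm_nonneg (ψ c)
    have hnorm : ‖ψ c‖ = 0 := le_antisymm hle this
    exact norm_eq_zero.mp hnorm
  -- the two center values vanish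
  have hb0 : ψ m₀ = 0 := by
    apply hzero
    intro k
    have h := (key_bound t u v w E ψ s p hF hrec ht (3*k+r) (hcyc k)).1
    have e1 : m₀ + (-1) * ((2^(3*k+r+1):ℕ):ℤ) = -p - ((2^(3*k+r+1):ℕ):ℤ) := by omega
    have e2 : m₀ + 1 * ((2^(3*k+r+1):ℕ):ℤ) = -p + ((2^(3*k+r+1):ℕ):ℤ) := by omega
    have e3 : m₀ + 2 * ((2^(3*k+r+1):ℕ):ℤ) = -p + 2*((2^(3*k+r+1):ℕ):ℤ) := by omega
    rw [hm₀, e1, e2, e3]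
    exact h
  have hb1 : ψ (m₀ - 1) = 0 := by
    apply hzero
    intro k
    have h := (key_bound t u v w E ψ s p hF hrec ht (3*k+r) (hcyc k)).2
    have e1 : m₀ - 1 + (-1) * ((2^(3*k+r+1):ℕ):ℤ) = -p - ((2^(3*k+r+1):ℕ):ℤ) - 1 := by omega
    have e2 : m₀ - 1 + 1 * ((2^(3*k+r+1):ℕ):ℤ) = -p + ((2^(3*k+r+1):ℕ):ℤ) - 1 := by omega
    have e3 : m₀ - 1 + 2 * ((2^(3*k+r+1):ℕ):ℤ) = -p + 2*((2^(3*k+r+1):ℕ):ℤ) - 1 := by omega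
    rw [e1, e2, e3]
    exact h
  -- propagate to all sites
  have hfwd : ∀ k : ℕ, ψ (m₀ - 1 + k) = 0 ∧ ψ (m₀ + k) = 0 := by
    intro k
    induction k with
    | zero => constructor <;> simpa using (by first | exact hb1 | exact hb0)
    | succ k ih =>
      obtain ⟨ih1, ih2⟩ := ih
      have h := hrec (m₀ + k)
      rw [show m₀ + (k:ℤ) - 1 = m₀ - 1 + k by ring] at h
      rw [ih1, ih2] at h
      have h' : Fc t u v w ω (m₀ + k) * ψ (m₀ + k + 1) = 0 := by linear_combination h
      have h0 := (mul_eq_zero.mp h').resolve_left (hF _)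
      constructor
      · push_cast
        rw [show m₀ - 1 + ((k:ℤ)+1) = m₀ + k by ring]
        exact ih2
      · push_cast
        rw [show m₀ + ((k:ℤ)+1) = m₀ + k + 1 by ring]
        exact h0
  have hbwd : ∀ k : ℕ, ψ (m₀ - 1 - k) = 0 ∧ ψ (m₀ - k) = 0 := by
    intro k
    induction k with
    | zero => constructor <;> simpa using (by first | exact hb1 | exact hb0)
    | succ k ih =>
      obtain ⟨ih1, ih2⟩ := ih
      have h := hrec (m₀ - 1 - k)
      rw [show m₀ - 1 - (k:ℤ) + 1 = m₀ - k by ring] at h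
      rw [ih1, ih2] at h
      have h' : Fc t u v w ω (m₀ - 1 - k - 1) * ψ (m₀ - 1 - k - 1) = 0 := by
        linear_combination h
      have h0 := (mul_eq_zero.mp h').resolve_left (hF _)
      constructor
      · push_cast
        rw [show m₀ - 1 - ((k:ℤ)+1) = m₀ - 1 - k - 1 by ring]
        exact h0
      · push_cast
        rw [show m₀ - ((k:ℤ)+1) = m₀ - 1 - k by ring]
        exact ih1
  funext m
  show ψ m = 0
  rcases le_or_gt m₀ m with h | h
  · have h1 := (hfwd (m - m₀).toNat).2
    rw [show m₀ + ((m - m₀).toNat : ℤ) = m by omega] at h1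
    exact h1
  · have h1 := (hbwd (m₀ - m).toNat).2
    rw [show m₀ - ((m₀ - m).toNat : ℤ) = m by omega] at h1
    exact h1
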